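/- For words u, v, a subset I of positions of u, and a subset J of positions of v inside u*v, one has pack((u*v)[I ∪ J']) = pack(u[I]) * pack(v[J]), where J' is J shifted by |u|. -/

import Mathlib

/-- Renaming map for packing: sends letter `i` to the number of distinct
nonzero letters of `w` that are `≤ i` (so `0 ↦ 0`). -/
def packFun (w : List ℕ) (i : ℕ) : ℕ :=
  (w.toFinset.filter (fun j => j ≠ 0 ∧ j ≤ i)).card

/-- The pack operator: order-preserving relabeling of the nonzero letters onto `{1,…,k}`. -/
def pack (w : List ℕ) : List ℕ := w.map (packFun w)

/-- `wsup w` is the maximum letter of `w` (`0` for the empty word). -/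
def wsup (w : List ℕ) : ℕ := w.foldr max 0

/-- `shiftT t w` replaces each nonzero letter `n` of `w` by `n + t`, fixing `0`. -/
def shiftT (t : ℕ) (w : List ℕ) : List ℕ := w.map fun n => if n = 0 then 0 else n + t

/-- Shifted concatenation `u * v = u · T_{sup u}(v)`. -/
def sconcat (u v : List ℕ) : List ℕ := u ++ shiftT (wsup u) v

/-- `w[I]`: the subword of `w` keeping the letters at positions in `I` (0-indexed), in order. -/
def subword (w : List ℕ) (I : Finset ℕ) : List ℕ :=
  ((List.range w.length).filter fun i => decide (i ∈ I)).map fun i => w.getD i 0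

/-- number of distinct nonzero letters -/
def kx (w : List ℕ) : ℕ := (w.toFinset.filter (fun j => j ≠ 0)).card

lemma le_wsup {a : ℕ} {w : List ℕ} (h : a ∈ w) : a ≤ wsup w := by
  induction w with
  | nil => cases h
  | cons b l ih =>
    rcases List.mem_cons.1 h with rfl | h
    · exact le_max_left _ _
    · exact le_trans (ih h) (le_max_right _ _)

lemma wsup_le {w : List ℕ} {c : ℕ} (h : ∀ a ∈ w, a ≤ c) : wsup w ≤ c := by
  induction w with
  | nil => exact Nat.zero_le c
  | cons b l ih =>
    exact max_le (h b (List.mem_cons_self)) (ih fun a ha => h a (List.mem_cons_of_mem _ ha))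

lemma wsup_mem {w : List ℕ} : wsup w = 0 ∨ wsup w ∈ w := by
  induction w with
  | nil => exact Or.inl rfl
  | cons b l ih =>
    have hcons : wsup (b :: l) = max b (wsup l) := rfl
    rcases le_total (wsup l) b with h | h
    · right; rw [hcons, max_eq_left h]; exact List.mem_cons_self
    · rcases ih with h0 | hm
      · left; rw [hcons, max_eq_right h, h0]
      · right; rw [hcons, max_eq_right h]; exact List.mem_cons_of_mem _ hm

lemma packFun_le' (w : List ℕ) (i : ℕ) : packFun w i ≤ kx w := by
  apply Finset.card_le_card
  intro x hx
  simp only [Finset.mem_filter] at hx ⊢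
  exact ⟨hx.1, hx.2.1⟩

lemma packFun_zero (w : List ℕ) : packFun w 0 = 0 := by
  have h : w.toFinset.filter (fun j => j ≠ 0 ∧ j ≤ 0) = ∅ :=
    Finset.filter_eq_empty_iff.2 (by intro x _ hx; omega)
  rw [packFun, h, Finset.card_empty]

lemma packFun_pos {w : List ℕ} {n : ℕ} (hn : n ∈ w) (h0 : n ≠ 0) : packFun w n ≠ 0 := by
  have hmem : n ∈ w.toFinset.filter (fun j => j ≠ 0 ∧ j ≤ n) :=
    Finset.mem_filter.2 ⟨List.mem_toFinset.2 hn, h0, le_refl n⟩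
  have := Finset.card_pos.2 ⟨n, hmem⟩
  unfold packFun
  omega

lemma wsup_pack (w : List ℕ) : wsup (pack w) = kx w := by
  apply le_antisymm
  · apply wsup_le
    intro a ha
    simp only [pack, List.mem_map] at ha
    obtain ⟨b, _, rfl⟩ := ha
    exact packFun_le' w b
  · rcases Nat.eq_zero_or_pos (kx w) with h0 | hpos
    · rw [h0]; exact Nat.zero_le _
    · -- there is a nonzero letter, so wsup w ∈ w and packFun w (wsup w) = kx w
      have hw : wsup w ∈ w := by
        rcases wsup_mem (w := w) with h | h
        · exfalso
          have : w.toFinset.filter (fun j => j ≠ 0) = ∅ := by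
            apply Finset.filter_eq_empty_iff.2
            intro x hx hne
            have := le_wsup (List.mem_toFinset.1 hx)
            omega
          rw [kx, this] at hpos; simp at hpos
        · exact h
      have : packFun w (wsup w) = kx w := by
        unfold packFun kx
        congr 1
        apply Finset.filter_congr
        intro x hx
        have := le_wsup (List.mem_toFinset.1 hx)
        simp [this]
      rw [← this]
      exact le_wsup (List.mem_map.2 ⟨wsup w, hw, rfl⟩)

lemma toFinset_shiftT (t : ℕ) (y : List ℕ) :
    (shiftT t y).toFinset = y.toFinset.image (fun n => if n = 0 then 0 else n + t) := by
  ext a; simp [shiftT]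

/-- key splitting of pack along a shifted concatenation -/
lemma pack_append_shiftT (x y : List ℕ) (t : ℕ) (ht : ∀ a ∈ x, a ≤ t) :
    pack (x ++ shiftT t y) = pack x ++ shiftT (kx x) (pack y) := by
  have hW : (x ++ shiftT t y).toFinset = x.toFinset ∪ (shiftT t y).toFinset :=
    List.toFinset_append
  have hmem_shift : ∀ j ∈ (shiftT t y).toFinset, j ≠ 0 → t < j := by
    intro j hj hj0
    rw [toFinset_shiftT] at hj
    simp only [Finset.mem_image] at hj
    obtain ⟨n, _, rfl⟩ := hj
    by_cases hn0 : n = 0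
    · rw [if_pos hn0] at hj0; omega
    · rw [if_neg hn0] at hj0 ⊢; omega
  show (x ++ shiftT t y).map (packFun (x ++ shiftT t y)) = _
  rw [List.map_append]
  congr 1
  · -- x part
    apply List.map_congr_left
    intro a ha
    unfold packFun
    rw [hW, Finset.filter_union]
    have : (shiftT t y).toFinset.filter (fun j => j ≠ 0 ∧ j ≤ a) = ∅ := by
      apply Finset.filter_eq_empty_iff.2
      intro j hj ⟨hj0, hja⟩
      have := hmem_shift j hj hj0
      have := ht a ha
      omega
    rw [this, Finset.union_empty]
  · -- shifted y part
    show ((y.map fun n => if n = 0 then 0 else n + t).map (packFun (x ++ shiftT t y)))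
      = (y.map (packFun y)).map (fun m => if m = 0 then 0 else m + kx x)
    rw [List.map_map, List.map_map]
    apply List.map_congr_left
    intro n hn
    simp only [Function.comp_apply]
    by_cases h0 : n = 0
    · subst h0
      simp [packFun_zero]
    · rw [if_neg h0]
      have hy0 : packFun y n ≠ 0 := packFun_pos hn h0
      rw [if_neg hy0]
      have hx_card : x.toFinset.filter (fun j => j ≠ 0 ∧ j ≤ n + t)
          = x.toFinset.filter (fun j => j ≠ 0) := by
        apply Finset.filter_congr
        intro j hj
        have := ht j (List.mem_toFinset.1 hj)
        exact ⟨fun h => h.1, fun h => ⟨h, by omega⟩⟩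
      have hy_card : ((shiftT t y).toFinset.filter (fun j => j ≠ 0 ∧ j ≤ n + t)).card
          = (y.toFinset.filter (fun j => j ≠ 0 ∧ j ≤ n)).card := by
        rw [toFinset_shiftT, Finset.filter_image, Finset.card_image_of_injOn]
        · congr 1
          apply Finset.filter_congr
          intro m hm
          by_cases hm0 : m = 0
          · subst hm0; simp
          · rw [if_neg hm0]
            exact ⟨fun h => ⟨hm0, by omega⟩, fun h => ⟨by omega, by omega⟩⟩
        · intro a ha b hb hab
          simp only [Finset.coe_filter, Set.mem_setOf_eq] at ha hb
          simp only at hab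
          by_cases ha0 : a = 0
          · exfalso; rw [if_pos ha0] at ha; exact ha.2.1 rfl
          by_cases hb0 : b = 0
          · exfalso; rw [if_pos hb0] at hb; exact hb.2.1 rfl
          rw [if_neg ha0, if_neg hb0] at hab; omega
      unfold packFun kx
      rw [hW, Finset.filter_union, Finset.card_union_of_disjoint, hx_card, hy_card]
      · omega
      · -- disjointness
        rw [Finset.disjoint_left]
        intro j hj hj'
        simp only [Finset.mem_filter] at hj hj'
        have h1 := ht j (List.mem_toFinset.1 hj.1)
        have h2 := hmem_shift j hj'.1 hj'.2.1
        omega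

lemma subword_shiftT (t : ℕ) (v : List ℕ) (J : Finset ℕ) :
    subword (shiftT t v) J = shiftT t (subword v J) := by
  unfold subword shiftT
  rw [List.length_map, List.map_map]
  apply List.map_congr_left
  intro i hi
  have hi' : i < v.length := by
    have := List.of_mem_filter hi
    have := List.mem_filter.1 hi |>.1
    simpa [List.mem_range] using this
  simp only [Function.comp_apply]
  rw [List.getD_eq_getElem _ _ (by simpa using hi'), List.getD_eq_getElem _ _ hi',
    List.getElem_map]

lemma subword_append (a b : List ℕ) (I J : Finset ℕ)
    (hI : I ⊆ Finset.range a.length) (hJ : J ⊆ Finset.range b.length) :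
    subword (a ++ b) (I ∪ J.image (· + a.length)) = subword a I ++ subword b J := by
  unfold subword
  rw [List.length_append, List.range_add, List.filter_append, List.map_append]
  congr 1
  · -- first part
    rw [List.filter_congr (q := fun i => decide (i ∈ I))]
    · apply List.map_congr_left
      intro i hi
      have hi' : i < a.length := by
        have := List.mem_filter.1 hi |>.1
        simpa [List.mem_range] using this
      exact List.getD_append _ _ _ _ hi'
    · intro i hi
      rw [List.mem_range] at hi
      simp only [decide_eq_decide, Finset.mem_union, Finset.mem_image]
      constructor
      · rintro (h | ⟨j, hj, rfl⟩)
        · exact h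
        · omega
      · exact Or.inl
  · -- second part
    rw [List.filter_map, List.map_map]
    rw [List.filter_congr (q := fun i => decide (i ∈ J))]
    · apply List.map_congr_left
      intro i hi
      have hi' : i < b.length := by
        have := List.mem_filter.1 hi |>.1
        simpa [List.mem_range] using this
      simp only [Function.comp_apply]
      rw [List.getD_append_right _ _ _ _ (by omega)]
      congr 1
      omega
    · intro i hi
      rw [List.mem_range] at hi
      simp only [Function.comp_apply, decide_eq_decide, Finset.mem_union, Finset.mem_image]
      constructor
      · rintro (h | ⟨j, hj, hji⟩)
        · have := hI h; rw [Finset.mem_range] at this; omega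
        · have : j = i := by omega
          subst this; exact hj
      · intro h; exact Or.inr ⟨i, h, by omega⟩

/-- `pack((u*v)[I ∪ J']) = pack(u[I]) * pack(v[J])` where `J'` is `J` shifted by `|u|`. -/
theorem pack_subword_sconcat (u v : List ℕ) (I J : Finset ℕ)
    (hI : I ⊆ Finset.range u.length) (hJ : J ⊆ Finset.range v.length) :
    pack (subword (sconcat u v) (I ∪ J.image (· + u.length)))
      = sconcat (pack (subword u I)) (pack (subword v J)) := by
  have hlen : (shiftT (wsup u) v).length = v.length := List.length_map _
  rw [sconcat, subword_append u (shiftT (wsup u) v) I J hI (by rwa [hlen]),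
    subword_shiftT, pack_append_shiftT]
  · rw [sconcat, wsup_pack]
  · intro a ha
    unfold subword at ha
    rw [List.mem_map] at ha
    obtain ⟨i, hi, rfl⟩ := ha
    have hi' : i < u.length := by
      have := List.mem_filter.1 hi |>.1
      simpa [List.mem_range] using this
    rw [List.getD_eq_getElem _ _ hi']
    exact le_wsup (List.getElem_mem _)
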